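/- Let ‖·‖ be a norm on ℝ^d, let Q be a collection of finite subsets of ℝ^d each with at least 2 elements, and let E_0 = {e ⊆ ℝ^d : e is congruent in (ℝ^d, ‖·‖) to some f ∈ Q}. For t a positive integer, let B_t = {f ∪ T : f ∈ Q, T ⊆ ℝ^d, f ∩ T = ∅, |T| = t} and E_t = {e ⊆ ℝ^d : e is congruent in (ℝ^d, ‖·‖) to some g ∈ B_t}. Let H_0 = (ℝ^d, E_0) and H_t = (ℝ^d, E_t). If χ(H_0) < ∞, then χ(H_t) = χ(H_0). -/

import Mathlib

/-- A proper coloring of a hypergraph with edge set `E`: no edge is monochromatic. -/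
def IsProperColoring {V : Type} {C : Type} (E : Set (Set V)) (φ : V → C) : Prop :=
  ∀ e ∈ E, ∃ x ∈ e, ∃ y ∈ e, φ x ≠ φ y

/-- The chromatic number of a hypergraph with vertex type `V` and edge set `E`. -/
noncomputable def chromNum {V : Type} (E : Set (Set V)) : Cardinal :=
  sInf {c : Cardinal | ∃ (C : Type) (φ : V → C), Cardinal.mk C = c ∧ IsProperColoring E φ}

/-- Congruence in `(ℝ^d, ‖·‖)` where the norm is given by `N`: one set is the image of the
other under the composition of a surjective linear isometry of `(ℝ^d, N)` and a translation. -/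
def NormCongruent (d : ℕ) (N : Seminorm ℝ (Fin d → ℝ)) (X Y : Set (Fin d → ℝ)) : Prop :=
  ∃ (f : (Fin d → ℝ) →ₗ[ℝ] (Fin d → ℝ)) (v : Fin d → ℝ),
    Function.Surjective f ∧ (∀ x, N (f x) = N x) ∧ Y = (fun x => f x + v) '' X

section Aux

variable {d : ℕ} {N : Seminorm ℝ (Fin d → ℝ)}

lemma aux_lin_inj (hN : ∀ x : Fin d → ℝ, N x = 0 → x = 0)
    {σ : (Fin d → ℝ) →ₗ[ℝ] (Fin d → ℝ)} (hiso : ∀ x, N (σ x) = N x) :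
    Function.Injective σ := by
  intro x y h
  have h0 : σ (x - y) = 0 := by rw [map_sub, h, sub_self]
  have h1 := hiso (x - y)
  rw [h0, map_zero] at h1
  exact sub_eq_zero.mp (hN _ h1.symm)

lemma aux_map_bij (hN : ∀ x : Fin d → ℝ, N x = 0 → x = 0)
    {σ : (Fin d → ℝ) →ₗ[ℝ] (Fin d → ℝ)} (hsurj : Function.Surjective σ)
    (hiso : ∀ x, N (σ x) = N x) (u : Fin d → ℝ) :
    Function.Bijective (fun x => σ x + u) := by
  constructor
  · intro x y h
    exact aux_lin_inj hN hiso (by simpa using h)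
  · intro y
    obtain ⟨x, hx⟩ := hsurj (y - u)
    exact ⟨x, by simp [hx]⟩

end Aux

/-- Theorem 4.4: let `Q` be a collection of finite subsets of `(ℝ^d, ‖·‖)`, each with at
least 2 elements, `E_0` the set of congruent copies of members of `Q`, `B_t` the augmentations
of members of `Q` by `t` extra points, and `E_t` the set of congruent copies of members of
`B_t`. If `χ(ℝ^d, E_0) < ∞` then `χ(ℝ^d, E_t) = χ(ℝ^d, E_0)`. -/
theorem chromNum_augmented_edges_eq (d : ℕ) (N : Seminorm ℝ (Fin d → ℝ))
    (hN : ∀ x : Fin d → ℝ, N x = 0 → x = 0)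
    (Q : Set (Set (Fin d → ℝ))) (hQ : ∀ f ∈ Q, f.Finite ∧ 2 ≤ f.ncard)
    (t : ℕ) (ht : 0 < t)
    (E₀ Bt Et : Set (Set (Fin d → ℝ)))
    (hE₀ : E₀ = {e | ∃ f ∈ Q, NormCongruent d N f e})
    (hBt : Bt = {g | ∃ f ∈ Q, ∃ T : Set (Fin d → ℝ),
      T.Finite ∧ T.ncard = t ∧ f ∩ T = ∅ ∧ g = f ∪ T})
    (hEt : Et = {e | ∃ g ∈ Bt, NormCongruent d N g e})
    (hfin : chromNum E₀ < Cardinal.aleph0) :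
    chromNum Et = chromNum E₀ := by
  classical
  subst hE₀ hBt hEt
  set E₀ : Set (Set (Fin d → ℝ)) := {e | ∃ f ∈ Q, NormCongruent d N f e} with hE₀
  set Bt : Set (Set (Fin d → ℝ)) := {g | ∃ f ∈ Q, ∃ T : Set (Fin d → ℝ),
      T.Finite ∧ T.ncard = t ∧ f ∩ T = ∅ ∧ g = f ∪ T} with hBt
  set Et : Set (Set (Fin d → ℝ)) := {e | ∃ g ∈ Bt, NormCongruent d N g e} with hEt
  -- basic facts about edges of E₀
  have hE0fin : ∀ e ∈ E₀, e.Finite := by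
    rintro e ⟨f, hf, σ, u, hsurj, hiso, rfl⟩
    exact ((hQ f hf).1).image _
  have hE0two : ∀ e ∈ E₀, ∃ x ∈ e, ∃ y ∈ e, x ≠ y := by
    rintro e ⟨f, hf, σ, u, hsurj, hiso, rfl⟩
    obtain ⟨x, hx, y, hy, hxy⟩ := (Set.one_lt_ncard (hQ f hf).1).mp (hQ f hf).2
    exact ⟨_, Set.mem_image_of_mem _ hx, _, Set.mem_image_of_mem _ hy,
      fun h => hxy ((aux_map_bij hN hsurj hiso u).1 h)⟩
  -- translation invariance of E₀
  have htrans : ∀ e ∈ E₀, ∀ v : Fin d → ℝ, (fun x => x + v) '' e ∈ E₀ := by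
    rintro e ⟨f, hf, σ, u, hsurj, hiso, rfl⟩ v
    refine ⟨f, hf, σ, u + v, hsurj, hiso, ?_⟩
    rw [Set.image_image]
    simp [add_assoc]
  -- augmentation: adding t points to an E₀ edge gives an Et edge
  have haug : ∀ e ∈ E₀, ∀ T : Set (Fin d → ℝ), T.Finite → T.ncard = t → e ∩ T = ∅ →
      e ∪ T ∈ Et := by
    rintro e ⟨f, hf, σ, u, hsurj, hiso, him⟩ T hTfin hTc hdT
    have hbij := aux_map_bij hN hsurj hiso u
    set m : (Fin d → ℝ) → (Fin d → ℝ) := fun x => σ x + u with hm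
    set T' : Set (Fin d → ℝ) := m ⁻¹' T with hT'
    have himT : m '' T' = T := Set.image_preimage_eq T hbij.2
    have hT'fin : T'.Finite := hTfin.preimage hbij.1.injOn
    have hT'c : T'.ncard = t := by
      rw [← hTc, ← himT, Set.ncard_image_of_injective T' hbij.1]
    have hdT' : f ∩ T' = ∅ := by
      rw [Set.eq_empty_iff_forall_notMem]
      rintro x ⟨hxf, hxT'⟩
      have hmx : m x ∈ e ∩ T := ⟨him ▸ Set.mem_image_of_mem m hxf, hxT'⟩
      rw [hdT] at hmx
      exact hmx
    refine ⟨f ∪ T', ⟨f, hf, T', hT'fin, hT'c, hdT', rfl⟩, σ, u, hsurj, hiso, ?_⟩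
    rw [Set.image_union, ← him, himT]
  -- every edge of Et contains an edge of E₀
  have hEtsub : ∀ e ∈ Et, ∃ e₀ ∈ E₀, e₀ ⊆ e := by
    rintro e ⟨g, ⟨f, hf, T, hTfin, hTc, hdT, rfl⟩, σ, u, hsurj, hiso, rfl⟩
    refine ⟨(fun x => σ x + u) '' f, ⟨f, hf, σ, u, hsurj, hiso, rfl⟩, ?_⟩
    exact Set.image_mono Set.subset_union_left
  -- the two coloring sets
  set S₀ : Set Cardinal :=
    {c : Cardinal | ∃ (C : Type) (φ : (Fin d → ℝ) → C),
      Cardinal.mk C = c ∧ IsProperColoring E₀ φ} with hS₀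
  set St : Set Cardinal :=
    {c : Cardinal | ∃ (C : Type) (φ : (Fin d → ℝ) → C),
      Cardinal.mk C = c ∧ IsProperColoring Et φ} with hSt
  have hchrom0 : chromNum E₀ = sInf S₀ := rfl
  have hchromt : chromNum Et = sInf St := rfl
  have hS₀ne : S₀.Nonempty :=
    ⟨Cardinal.mk (Fin d → ℝ), Fin d → ℝ, id, rfl, fun e he => hE0two e he⟩
  have hStne : St.Nonempty := by
    refine ⟨Cardinal.mk (Fin d → ℝ), Fin d → ℝ, id, rfl, fun e he => ?_⟩
    obtain ⟨e₀, he₀, hsub⟩ := hEtsub e he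
    obtain ⟨x, hx, y, hy, hxy⟩ := hE0two e₀ he₀
    exact ⟨x, hsub hx, y, hsub hy, hxy⟩
  have hsub : S₀ ⊆ St := by
    rintro c ⟨C, φ, hc, hp⟩
    refine ⟨C, φ, hc, fun e he => ?_⟩
    obtain ⟨e₀, he₀, hsube⟩ := hEtsub e he
    obtain ⟨x, hx, y, hy, hxy⟩ := hp e₀ he₀
    exact ⟨x, hsube hx, y, hsube hy, hxy⟩
  rw [hchrom0, hchromt]
  refine le_antisymm (csInf_le_csInf (OrderBot.bddBelow _) hS₀ne hsub) ?_
  -- hard direction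
  by_contra hlt
  push_neg at hlt
  obtain ⟨C, φ, hC, hφ⟩ := csInf_mem hStne
  -- every coloring with colors C has a monochromatic E₀ edge
  have hnoC : ∀ ψ : (Fin d → ℝ) → C, ∃ e ∈ E₀, ∀ x ∈ e, ∀ y ∈ e, ψ x = ψ y := by
    intro ψ
    by_contra h
    push_neg at h
    have hp : IsProperColoring E₀ ψ := fun e he => by
      obtain ⟨x, hx, y, hy, hxy⟩ := h e he
      exact ⟨x, hx, y, hy, hxy⟩
    have hle : sInf S₀ ≤ Cardinal.mk C := csInf_le (OrderBot.bddBelow _) ⟨C, ψ, rfl, hp⟩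
    rw [hC] at hle
    exact absurd hle (not_le.mpr hlt)
  -- C is finite
  have hCfin : Finite C := by
    have h1 : Cardinal.mk C < Cardinal.aleph0 := by
      rw [hC]; exact lt_trans hlt hfin
    exact Cardinal.mk_lt_aleph0_iff.mp h1
  haveI : Finite C := hCfin
  -- the vertex set is infinite
  have hVinf : Infinite (Fin d → ℝ) := by
    obtain ⟨e₁, he₁, -⟩ := hnoC φ
    obtain ⟨x, hx, y, hy, hxy⟩ := hE0two e₁ he₁
    refine Infinite.of_injective (fun r : ℝ => x + r • (y - x)) ?_
    intro r s h
    have h2 : (r - s) • (y - x) = 0 := by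
      rw [sub_smul]
      have h3 := add_left_cancel h
      rw [h3, sub_self]
    rcases smul_eq_zero.mp h2 with h3 | h3
    · exact sub_eq_zero.mp h3
    · exact absurd (sub_eq_zero.mp h3).symm hxy
  haveI : Infinite (Fin d → ℝ) := hVinf
  -- compactness: a finite family of edges such that every C-coloring is mono on one of them
  letI : TopologicalSpace C := ⊥
  haveI : DiscreteTopology C := ⟨rfl⟩
  obtain ⟨Es, hEs⟩ : ∃ Es : Finset E₀, (Set.univ : Set ((Fin d → ℝ) → C)) ⊆
      ⋃ i ∈ Es, {ψ : (Fin d → ℝ) → C |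
        ∀ x ∈ (i : Set (Fin d → ℝ)), ∀ y ∈ (i : Set (Fin d → ℝ)), ψ x = ψ y} := by
    apply isCompact_univ.elim_finite_subcover
      (fun i : E₀ => {ψ : (Fin d → ℝ) → C |
        ∀ x ∈ (i : Set (Fin d → ℝ)), ∀ y ∈ (i : Set (Fin d → ℝ)), ψ x = ψ y})
    · intro i
      have hfe : (i : Set (Fin d → ℝ)).Finite := hE0fin i i.2
      have heq : {ψ : (Fin d → ℝ) → C |
          ∀ x ∈ (i : Set (Fin d → ℝ)), ∀ y ∈ (i : Set (Fin d → ℝ)), ψ x = ψ y}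
          = ⋂ x ∈ (i : Set (Fin d → ℝ)), ⋂ y ∈ (i : Set (Fin d → ℝ)),
            {ψ : (Fin d → ℝ) → C | ψ x = ψ y} := by
        ext ψ; simp
      rw [heq]
      refine hfe.isOpen_biInter fun x hx => hfe.isOpen_biInter fun y hy => ?_
      have heq2 : {ψ : (Fin d → ℝ) → C | ψ x = ψ y}
          = ⋃ c : C, ((fun ψ : (Fin d → ℝ) → C => ψ x) ⁻¹' {c}) ∩
            ((fun ψ : (Fin d → ℝ) → C => ψ y) ⁻¹' {c}) := by
        ext ψ; simp [eq_comm]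
      rw [heq2]
      exact isOpen_iUnion fun c =>
        ((continuous_apply x).isOpen_preimage _ (isOpen_discrete _)).inter
          ((continuous_apply y).isOpen_preimage _ (isOpen_discrete _))
    · intro ψ _
      obtain ⟨e, he, hmono⟩ := hnoC ψ
      exact Set.mem_iUnion.mpr ⟨⟨e, he⟩, hmono⟩
  -- the set of points in finite color classes
  set Bad : Set (Fin d → ℝ) := {x | (φ ⁻¹' {φ x}).Finite} with hBad
  have hBadfin : Bad.Finite := by
    have hsub2 : Bad ⊆ ⋃ c ∈ {c : C | (φ ⁻¹' {c}).Finite}, φ ⁻¹' {c} := by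
      intro x hx
      exact Set.mem_biUnion hx rfl
    exact Set.Finite.subset (Set.Finite.biUnion (Set.toFinite _) fun c hc => hc) hsub2
  -- choose a translation avoiding Bad
  have hFfin : (⋃ i ∈ Es, (fun p : (Fin d → ℝ) × (Fin d → ℝ) => p.1 - p.2) ''
      (Bad ×ˢ (i : Set (Fin d → ℝ)))).Finite :=
    Set.Finite.biUnion Es.finite_toSet fun i _ => (hBadfin.prod (hE0fin i i.2)).image _
  obtain ⟨v, hv⟩ := hFfin.infinite_compl.nonempty
  have hvnot : ∀ i ∈ Es, ∀ x ∈ (i : Set (Fin d → ℝ)), x + v ∉ Bad := by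
    intro i hi x hx hbad
    exact hv (Set.mem_biUnion hi ⟨(x + v, x), ⟨hbad, hx⟩, by simp⟩)
  -- the translated coloring is mono on some edge of Es
  set ρ : (Fin d → ℝ) → C := fun x => φ (x + v) with hρ
  have hρmem := hEs (Set.mem_univ ρ)
  rw [Set.mem_iUnion₂] at hρmem
  obtain ⟨i, hiEs, hmono⟩ := hρmem
  have heE₀ : (i : Set (Fin d → ℝ)) ∈ E₀ := i.2
  set e : Set (Fin d → ℝ) := (i : Set (Fin d → ℝ)) with he
  set e' : Set (Fin d → ℝ) := (fun x => x + v) '' e with he'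
  have he'E₀ : e' ∈ E₀ := htrans e heE₀ v
  obtain ⟨x₀, hx₀, -, -, -⟩ := hE0two e heE₀
  set c : C := φ (x₀ + v) with hc0
  have he'mono : ∀ z ∈ e', φ z = c := by
    rintro z ⟨w, hw, rfl⟩
    exact hmono w hw x₀ hx₀
  -- the color class of c is infinite
  have hclassinf : (φ ⁻¹' {c}).Infinite := hvnot i hiEs x₀ hx₀
  -- choose T
  have he'fin : e'.Finite := (hE0fin e heE₀).image _
  obtain ⟨T, hTsub, hTfin, hTc⟩ := (hclassinf.diff he'fin).exists_subset_ncard_eq t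
  have hdisj : e' ∩ T = ∅ := by
    rw [Set.eq_empty_iff_forall_notMem]
    rintro z ⟨hz1, hz2⟩
    exact (hTsub hz2).2 hz1
  have hmemEt : e' ∪ T ∈ Et := haug e' he'E₀ T hTfin hTc hdisj
  obtain ⟨x, hx, y, hy, hxy⟩ := hφ _ hmemEt
  have hcol : ∀ z ∈ e' ∪ T, φ z = c := by
    rintro z (hz | hz)
    · exact he'mono z hz
    · exact (hTsub hz).1
  exact hxy ((hcol x hx).trans (hcol y hy).symm)
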